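/- Let w be a right-infinite word over a finite alphabet with linear factor complexity. Then the set of primitive words y such that y^n is a factor of w for every n ≥ 1 is finite. -/

import Mathlib

variable {α : Type*}

/-- `u` occurs in the infinite word `w` at position `i`. -/
def FactorAt (w : ℕ → α) (i : ℕ) (u : List α) : Prop :=
  u = (List.range u.length).map fun k => w (i + k)

/-- The set of (finite) factors of the right-infinite word `w`. -/
def Fac (w : ℕ → α) : Set (List α) := {u | ∃ i, FactorAt w i u}

/-- The factor complexity: the number of distinct length-`n` factors of `w`. -/
noncomputable def FacComplexity (w : ℕ → α) (n : ℕ) : ℕ :=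
  Set.ncard {u : List α | u.length = n ∧ u ∈ Fac w}

/-- `listPow y k` is the `k`-fold concatenation `y^k`. -/
def listPow (y : List α) : ℕ → List α
  | 0 => []
  | n + 1 => y ++ listPow y n

/-- A nonempty word is primitive if it is not a proper power. -/
def Primitive (y : List α) : Prop :=
  y ≠ [] ∧ ∀ (z : List α) (k : ℕ), y = listPow z k → k = 1

/-! ### Windows of infinite words -/

/-- The length-`n` window of `f` starting at `i`. -/
def win (f : ℕ → α) (i n : ℕ) : List α := (List.range n).map fun k => f (i + k)

@[simp] lemma win_length (f : ℕ → α) (i n : ℕ) : (win f i n).length = n := by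
  simp [win]

lemma win_getElem (f : ℕ → α) (i n k : ℕ) (hk : k < n) :
    (win f i n)[k]'(by simpa using hk) = f (i + k) := by
  simp [win]

lemma win_getD (d : α) (f : ℕ → α) (i n k : ℕ) (hk : k < n) :
    (win f i n).getD k d = f (i + k) := by
  rw [List.getD_eq_getElem _ _ (by simpa using hk)]
  exact win_getElem f i n k hk

lemma win_eq_win_iff (f g : ℕ → α) (i j n : ℕ) :
    win f i n = win g j n ↔ ∀ k < n, f (i + k) = g (j + k) := by
  rw [win, win, List.map_eq_map_iff]
  constructor
  · intro h k hk; exact h k (List.mem_range.mpr hk)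
  · intro h k hk; exact h k (List.mem_range.mp hk)

lemma win_succ (f : ℕ → α) (i n : ℕ) :
    win f i (n + 1) = win f i n ++ [f (i + n)] := by
  simp [win, List.range_succ]

lemma win_mem_fac (w : ℕ → α) (i n : ℕ) : win w i n ∈ Fac w := by
  exact ⟨i, by simp [FactorAt, win]⟩

lemma eq_win_of_match (d : α) (w : ℕ → α) (i : ℕ) (u : List α)
    (h : ∀ k < u.length, w (i + k) = u.getD k d) : u = win w i u.length := by
  apply List.ext_getElem (by simp)
  intro k h1 h2
  rw [win_getElem _ _ _ _ h1, h k h1, List.getD_eq_getElem _ _ h1]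

lemma win_add (f : ℕ → α) (i a b : ℕ) :
    win f i (a + b) = win f i a ++ win f (i + a) b := by
  simp only [win, List.range_add, List.map_append, List.map_map]
  congr 1
  apply List.map_congr_left
  intro k _
  simp [Function.comp]
  ring_nf

/-! ### Periodic extension of a finite word -/

/-- the periodic extension `y^∞`. -/
def pext (d : α) (y : List α) (k : ℕ) : α := y.getD (k % y.length) d

lemma pext_congr (d : α) (y : List α) {a b : ℕ} (h : a % y.length = b % y.length) :
    pext d y a = pext d y b := by simp [pext, h]

lemma pext_getD (d : α) (y : List α) (k : ℕ) (hk : k < y.length) :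
    pext d y k = y.getD k d := by simp [pext, Nat.mod_eq_of_lt hk]

@[simp] lemma listPow_length (y : List α) (n : ℕ) : (listPow y n).length = n * y.length := by
  induction n with
  | zero => simp [listPow]
  | succ n ih => simp [listPow, ih]; ring

lemma win_pext_self (d : α) (y : List α) : win (pext d y) 0 y.length = y := by
  apply List.ext_getElem (by simp [win])
  intro k h1 h2
  have h2' : k < y.length := h2
  rw [win_getElem _ _ _ _ h2']
  rw [pext, Nat.zero_add, Nat.mod_eq_of_lt h2', List.getD_eq_getElem _ _ h2']

lemma win_pext_shift (d : α) (y : List α) (i n : ℕ) :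
    win (pext d y) (i + y.length) n = win (pext d y) i n := by
  apply List.ext_getElem (by simp [win])
  intro k h1 h2
  have hk : k < n := by simpa [win] using h1
  rw [win_getElem _ _ _ _ hk, win_getElem _ _ _ _ hk]
  apply pext_congr
  conv_lhs => rw [show i + y.length + k = (i + k) + y.length by ring]
  exact Nat.add_mod_right _ _

lemma listPow_eq_win (d : α) (y : List α) (n : ℕ) :
    listPow y n = win (pext d y) 0 (n * y.length) := by
  induction n with
  | zero => simp [listPow, win]
  | succ n ih =>
    have hadd : (n + 1) * y.length = y.length + n * y.length := by ring
    rw [hadd, win_add, win_pext_shift d y 0, win_pext_self, ← ih]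
    rfl

/-! ### Fine and Wilf -/

/-- Fine and Wilf, fuelled version. -/
lemma finewilf : ∀ (s : ℕ) (p q n : ℕ) (f : ℕ → α), 0 < p → 0 < q → p + q ≤ s →
    p + q ≤ n →
    (∀ i, i + p < n → f (i + p) = f i) → (∀ i, i + q < n → f (i + q) = f i) →
    ∀ i, i + Nat.gcd p q < n - (p + q) → f (i + Nat.gcd p q) = f i := by
  intro s
  induction s with
  | zero => intro p q n f hp hq hs; omega
  | succ s ih =>
    intro p q n f hp hq hs hn hfp hfq i hi
    rcases lt_trichotomy p q with hlt | heq | hgt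
    · have hg : Nat.gcd p (q - p) = Nat.gcd p q := by
        conv_rhs => rw [show q = (q - p) + p by omega]
        rw [Nat.gcd_add_self_right]
      have hrec := ih p (q - p) (n - p) f hp (by omega) (by omega) (by omega)
        (fun j hj => hfp j (by omega))
        (fun j hj => by
          have h1 : f (j + (q - p) + p) = f (j + (q - p)) := hfp _ (by omega)
          have h2 : j + (q - p) + p = j + q := by omega
          have h3 : f (j + q) = f j := hfq j (by omega)
          rw [← h3, ← h2, h1])
        i (by omega)
      rwa [hg] at hrec
    · subst heq
      rw [Nat.gcd_self]
      exact hfp i (by omega)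
    · have hg : Nat.gcd (p - q) q = Nat.gcd p q := by
        conv_rhs => rw [show p = (p - q) + q by omega]
        rw [Nat.gcd_add_self_left]
      have hrec := ih (p - q) q (n - q) f (by omega) hq (by omega) (by omega)
        (fun j hj => by
          have h1 : f (j + (p - q) + q) = f (j + (p - q)) := hfq _ (by omega)
          have h2 : j + (p - q) + q = j + p := by omega
          have h3 : f (j + p) = f j := hfp j (by omega)
          rw [← h3, ← h2, h1])
        (fun j hj => hfq j (by omega))
        i (by omega)
      rwa [hg] at hrec

/-- transport values along a period. -/
lemma period_transport (f : ℕ → α) (g M : ℕ) (hg : 0 < g)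
    (hper : ∀ i, i + g < M → f (i + g) = f i) :
    ∀ a b, a ≤ b → a % g = b % g → b < M → f a = f b := by
  intro a b hab hmod hbM
  obtain ⟨c, rfl⟩ : ∃ c, b = a + c * g := by
    obtain ⟨t, ht⟩ : g ∣ b - a := (Nat.modEq_iff_dvd' hab).mp hmod
    exact ⟨t, by rw [Nat.mul_comm t g]; omega⟩
  clear hab hmod
  induction c with
  | zero => simp
  | succ c ihc =>
    have h1 : a + (c + 1) * g = a + c * g + g := by ring
    rw [h1, hper _ (by omega)]
    exact ihc (by omega)

/-- A word with a period dividing its length is a power. -/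
lemma eq_listPow_of_period (d : α) (y : List α) (g : ℕ) (hg : 0 < g)
    (hdvd : g ∣ y.length)
    (hper : ∀ b, b + g < y.length → y.getD (b + g) d = y.getD b d) :
    y = listPow (y.take g) (y.length / g) := by
  rcases eq_or_ne y [] with rfl | hy
  · simp [listPow]
  have hl : 0 < y.length := List.length_pos_of_ne_nil hy
  have hgl : g ≤ y.length := Nat.le_of_dvd hl hdvd
  have htl : (y.take g).length = g := by simp [hgl]
  have hlen : (listPow (y.take g) (y.length / g)).length = y.length := by
    rw [listPow_length, htl, Nat.div_mul_cancel hdvd]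
  apply List.ext_getElem (by rw [hlen])
  intro b hb1 hb2
  rw [← List.getD_eq_getElem y d hb1, ← List.getD_eq_getElem _ d hb2]
  rw [listPow_eq_win d, win_getD d _ _ _ b (by rw [htl, Nat.div_mul_cancel hdvd]; exact hb1),
    Nat.zero_add, pext, htl]
  have h1 : (y.take g).getD (b % g) d = y.getD (b % g) d := by
    have hbg : b % g < g := Nat.mod_lt _ hg
    rw [List.getD_eq_getElem _ d (by rw [htl]; exact hbg),
      List.getD_eq_getElem y d (by omega)]
    exact List.getElem_take
  rw [h1]
  exact (period_transport (fun i => y.getD i d) g y.length hg hper (b % g) b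
    (Nat.mod_le _ _) (Nat.mod_mod_of_dvd b dvd_rfl) hb1).symm

/-- Aligned offset: reading `pext` from an aligned position gives back `y`. -/
lemma pext_aligned (d : α) (y : List α) (hy : y ≠ []) (s b : ℕ) (hb : b < y.length) :
    pext d y (s + (y.length - s % y.length) % y.length + b) = y.getD b d := by
  have hl : 0 < y.length := List.length_pos_of_ne_nil hy
  set ℓ := y.length with hℓ
  set t := (ℓ - s % ℓ) % ℓ with ht
  have hdvd : ℓ ∣ (s + t) := by
    rcases Nat.eq_zero_or_pos (s % ℓ) with h0 | h0
    · have ht0 : t = 0 := by rw [ht, h0, Nat.sub_zero, Nat.mod_self]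
      rw [ht0, Nat.add_zero]
      exact Nat.dvd_of_mod_eq_zero h0
    · have hlt : ℓ - s % ℓ < ℓ := by
        have := Nat.mod_lt s hl
        omega
      have ht' : t = ℓ - s % ℓ := by rw [ht, Nat.mod_eq_of_lt hlt]
      refine ⟨s / ℓ + 1, ?_⟩
      have := Nat.div_add_mod s ℓ
      have hle : s % ℓ ≤ ℓ := le_of_lt (Nat.mod_lt s hl)
      rw [ht']
      ring_nf
      omega
  have hmod : (s + t + b) % ℓ = b := by
    have h0 : (s + t) % ℓ = 0 := Nat.mod_eq_zero_of_dvd hdvd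
    rw [Nat.add_mod, h0, Nat.zero_add, Nat.mod_eq_of_lt hb, Nat.mod_eq_of_lt hb]
  rw [pext, ← hℓ, hmod]

/-! ### The rotation relation -/

/-- `y'` is a rotation (conjugate) of `y`. -/
def Rot (d : α) (y y' : List α) : Prop :=
  y'.length = y.length ∧ ∃ r, ∀ b < y.length, y'.getD b d = y.getD ((b + r) % y.length) d

lemma rot_refl (d : α) (y : List α) : Rot d y y := by
  refine ⟨rfl, 0, fun b hb => ?_⟩
  rw [Nat.add_zero, Nat.mod_eq_of_lt hb]

lemma rot_left_finite [Finite α] (d : α) (y : List α) : {y' | Rot d y y'}.Finite := by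
  apply (List.finite_length_le α y.length).subset
  intro y' hy'
  exact le_of_eq hy'.1

lemma rot_right_finite [Finite α] (d : α) (y : List α) : {y' | Rot d y' y}.Finite := by
  apply (List.finite_length_le α y.length).subset
  intro y' hy'
  exact le_of_eq hy'.1.symm

/-- If long enough windows of the periodic extensions of two primitive words agree,
the second word is a rotation of the first. -/
lemma windows_eq_rot (d : α) (y y' : List α) (hy : Primitive y) (hy' : Primitive y')
    (s s' m : ℕ) (hm : 4 * (y.length + y'.length) ≤ m)
    (heq : win (pext d y) s m = win (pext d y') s' m) : Rot d y y' := by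
  obtain ⟨hyne, hypow⟩ := hy
  obtain ⟨hy'ne, hy'pow⟩ := hy'
  have hl : 0 < y.length := List.length_pos_of_ne_nil hyne
  have hl' : 0 < y'.length := List.length_pos_of_ne_nil hy'ne
  set ℓ := y.length with hℓdef
  set ℓ' := y'.length with hℓ'def
  rw [win_eq_win_iff] at heq
  set f : ℕ → α := fun k => pext d y (s + k) with hf
  have hfcong : ∀ a c, a % ℓ = c % ℓ → f a = f c := fun a c hac => by
    apply pext_congr
    rw [← hℓdef, Nat.add_mod s a, Nat.add_mod s c, hac]
  have hfℓ : ∀ k, f (k + ℓ) = f k := fun k =>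
    hfcong _ _ (Nat.add_mod_right k ℓ)
  have hfℓ' : ∀ k, k + ℓ' < m → f (k + ℓ') = f k := fun k hk => by
    rw [hf]; dsimp only
    rw [heq _ hk, heq _ (by omega)]
    apply pext_congr
    rw [← hℓ'def, show s' + (k + ℓ') = (s' + k) + ℓ' by ring, Nat.add_mod_right]
  have hfw := finewilf (ℓ + ℓ') ℓ ℓ' m f hl hl' le_rfl (by omega)
    (fun i _ => hfℓ i) hfℓ'
  set g := Nat.gcd ℓ ℓ' with hg
  have hgdvd : g ∣ ℓ := Nat.gcd_dvd_left _ _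
  have hgdvd' : g ∣ ℓ' := Nat.gcd_dvd_right _ _
  have hg0 : 0 < g := Nat.gcd_pos_of_pos_left _ hl
  have hgℓ : g ≤ ℓ := Nat.le_of_dvd hl hgdvd
  have hgℓ' : g ≤ ℓ' := Nat.le_of_dvd hl' hgdvd'
  set t := (ℓ - s % ℓ) % ℓ with htdef
  set t' := (ℓ' - s' % ℓ') % ℓ' with ht'def
  have htlt : t < ℓ := Nat.mod_lt _ hl
  have ht'lt : t' < ℓ' := Nat.mod_lt _ hl'
  have hyread : ∀ b, b < ℓ → y.getD b d = f (t + b) := fun b hb => by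
    rw [hf]; dsimp only
    rw [show s + (t + b) = s + t + b by ring]
    exact (pext_aligned d y hyne s b hb).symm
  have hy'read : ∀ b, b < ℓ' → y'.getD b d = f (t' + b) := fun b hb => by
    have h1 : pext d y' (s' + t' + b) = y'.getD b d := pext_aligned d y' hy'ne s' b hb
    have h2 : f (t' + b) = pext d y' (s' + (t' + b)) := heq _ (by omega)
    rw [h2, ← h1]
    ring_nf
  have hyper : ∀ b, b + g < ℓ → y.getD (b + g) d = y.getD b d := fun b hb => by
    rw [hyread _ (by omega), hyread _ (by omega), show t + (b + g) = (t + b) + g by ring]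
    exact hfw (t + b) (by omega)
  have hy'per : ∀ b, b + g < ℓ' → y'.getD (b + g) d = y'.getD b d := fun b hb => by
    rw [hy'read _ (by omega), hy'read _ (by omega), show t' + (b + g) = (t' + b) + g by ring]
    exact hfw (t' + b) (by omega)
  have h1 := hypow _ _ (eq_listPow_of_period d y g hg0 hgdvd hyper)
  have h2 := hy'pow _ _ (eq_listPow_of_period d y' g hg0 hgdvd' hy'per)
  have hℓg : ℓ = g := by
    have h3 := Nat.div_mul_cancel hgdvd
    rw [← hℓdef] at h1
    rw [h1, one_mul] at h3
    omega
  have hℓ'g : ℓ' = g := by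
    have h3 := Nat.div_mul_cancel hgdvd'
    rw [← hℓ'def] at h2
    rw [h2, one_mul] at h3
    omega
  refine ⟨by omega, t' + ℓ - t, fun b hb => ?_⟩
  have hb' : b < ℓ' := by omega
  rw [hy'read b hb']
  have hc : (b + (t' + ℓ - t)) % ℓ < ℓ := Nat.mod_lt _ hl
  rw [hyread _ hc]
  apply hfcong
  have e1 : (t + (b + (t' + ℓ - t)) % ℓ) % ℓ = (t + (b + (t' + ℓ - t))) % ℓ := by
    conv_rhs => rw [Nat.add_mod t (b + (t' + ℓ - t))]
    rw [Nat.add_mod t ((b + (t' + ℓ - t)) % ℓ)]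
    rw [Nat.mod_mod_of_dvd (b + (t' + ℓ - t)) dvd_rfl]
  rw [e1, show t + (b + (t' + ℓ - t)) = t' + b + ℓ by omega, Nat.add_mod_right]

lemma exists_match (d : α) (w : ℕ → α) (y : List α) (hyne : y ≠ [])
    (hS : ∀ n, 1 ≤ n → listPow y n ∈ Fac w) (m : ℕ) :
    ∃ i, ∀ k < m, w (i + k) = pext d y k := by
  have hl : 0 < y.length := List.length_pos_of_ne_nil hyne
  obtain ⟨i, hi⟩ := hS (m + 1) (by omega)
  rw [FactorAt] at hi
  have hlen : (listPow y (m + 1)).length = (m + 1) * y.length := listPow_length y (m + 1)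
  rw [listPow_eq_win d] at hi
  rw [win_length] at hi
  have hi' : win (pext d y) 0 ((m + 1) * y.length) = win w i ((m + 1) * y.length) := hi
  rw [win_eq_win_iff] at hi'
  refine ⟨i, fun k hk => ?_⟩
  have hk' : k < (m + 1) * y.length := by nlinarith
  have := hi' k hk'
  rw [Nat.zero_add] at this
  exact this.symm

/-- `u` is right special in `w`. -/
def RS (d : α) (w : ℕ → α) (u : List α) : Prop :=
  ∃ i j, (∀ k < u.length, w (i + k) = u.getD k d) ∧
    (∀ k < u.length, w (j + k) = u.getD k d) ∧
    w (i + u.length) ≠ w (j + u.length)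

lemma exists_RS (d : α) (w : ℕ → α)
    (hnp : ¬ ∃ N P, 0 < P ∧ ∀ k, N ≤ k → w (k + P) = w k)
    (y : List α) (hyne : y ≠ []) (hS : ∀ n, 1 ≤ n → listPow y n ∈ Fac w) (m : ℕ) :
    ∃ s, RS d w (win (pext d y) s m) := by
  by_contra hcon
  push_neg at hcon
  have hl : 0 < y.length := List.length_pos_of_ne_nil hyne
  set ℓ := y.length with hℓ
  obtain ⟨i₀, hi₀⟩ := exists_match d w y hyne hS m
  obtain ⟨i₁, hi₁⟩ := exists_match d w y hyne hS (m + ℓ)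
  have key : ∀ t, w (i₀ + t) = pext d y t := by
    intro t
    induction t using Nat.strong_induction_on with
    | _ t ih =>
    rcases lt_or_ge t m with htm | htm
    · exact hi₀ t htm
    · have hnotRS := hcon (t - m)
      rw [RS] at hnotRS
      push_neg at hnotRS
      have lenu : (win (pext d y) (t - m) m).length = m := win_length _ _ _
      have match1 : ∀ k < (win (pext d y) (t - m) m).length,
          w (i₀ + (t - m) + k) = (win (pext d y) (t - m) m).getD k d := by
        intro k hk
        rw [lenu] at hk
        rw [win_getD d _ _ _ _ hk]
        rw [show i₀ + (t - m) + k = i₀ + (t - m + k) by ring]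
        exact ih (t - m + k) (by omega)
      have match2 : ∀ k < (win (pext d y) (t - m) m).length,
          w (i₁ + (t - m) % ℓ + k) = (win (pext d y) (t - m) m).getD k d := by
        intro k hk
        rw [lenu] at hk
        rw [win_getD d _ _ _ _ hk]
        rw [show i₁ + (t - m) % ℓ + k = i₁ + ((t - m) % ℓ + k) by ring]
        rw [hi₁ _ (by have := Nat.mod_lt (t - m) hl; omega)]
        apply pext_congr
        rw [← hℓ, Nat.add_mod, Nat.mod_mod_of_dvd _ dvd_rfl, ← Nat.add_mod]
      have hcl := hnotRS (i₀ + (t - m)) (i₁ + (t - m) % ℓ) match1 match2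
      rw [lenu] at hcl
      have h2 : w (i₁ + (t - m) % ℓ + m) = pext d y t := by
        rw [show i₁ + (t - m) % ℓ + m = i₁ + ((t - m) % ℓ + m) by ring]
        rw [hi₁ _ (by have := Nat.mod_lt (t - m) hl; omega)]
        apply pext_congr
        rw [← hℓ, Nat.add_mod, Nat.mod_mod_of_dvd _ dvd_rfl, ← Nat.add_mod]
        congr 1
        omega
      rw [show i₀ + t = i₀ + (t - m) + m by omega, hcl, h2]
  apply hnp
  refine ⟨i₀, ℓ, hl, fun k hk => ?_⟩
  rw [show k + ℓ = i₀ + (k - i₀ + ℓ) by omega, show k = i₀ + (k - i₀) by omega, key, key]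
  nth_rewrite 2 [show k = i₀ + (k - i₀) by omega]
  exact pext_congr d y (by rw [← hℓ, Nat.add_mod_right])

lemma evp_bound (d : α) (w : ℕ → α) (N P : ℕ) (hP : 0 < P)
    (hper : ∀ k, N ≤ k → w (k + P) = w k)
    (y : List α) (hprim : Primitive y) (hS : ∀ n, 1 ≤ n → listPow y n ∈ Fac w) :
    y.length ≤ P := by
  obtain ⟨hyne, hypow⟩ := hprim
  have hl : 0 < y.length := List.length_pos_of_ne_nil hyne
  set ℓ := y.length with hℓ
  set M := N + 4 * (ℓ + P) + 4 * ℓ with hM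
  obtain ⟨i, hi⟩ := exists_match d w y hyne hS M
  set j := max i N with hj
  set e := j - i with he
  have hje : j = i + e := by omega
  have heN : e ≤ N := by omega
  have hjN : N ≤ j := by omega
  set f : ℕ → α := fun k => w (j + k) with hf
  have hfq : ∀ k, f (k + P) = f k := fun k => by
    show w (j + (k + P)) = w (j + k)
    rw [show j + (k + P) = (j + k) + P by ring]
    exact hper _ (by omega)
  have hfval : ∀ k, e + k < M → f k = pext d y (e + k) := fun k hk => by
    show w (j + k) = _
    rw [show j + k = i + (e + k) by omega]
    exact hi _ hk
  have hfp : ∀ k, k + ℓ < M - e → f (k + ℓ) = f k := fun k hk => by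
    rw [hfval _ (by omega), hfval _ (by omega)]
    exact pext_congr d y (by rw [← hℓ, show e + (k + ℓ) = (e + k) + ℓ by ring,
      Nat.add_mod_right])
  have hfw := finewilf (ℓ + P) ℓ P (M - e) f hl hP le_rfl (by omega) hfp (fun k _ => hfq k)
  set g := Nat.gcd ℓ P with hg
  have hgdvd : g ∣ ℓ := Nat.gcd_dvd_left _ _
  have hgdvdP : g ∣ P := Nat.gcd_dvd_right _ _
  have hg0 : 0 < g := Nat.gcd_pos_of_pos_left _ hl
  have hgℓ : g ≤ ℓ := Nat.le_of_dvd hl hgdvd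
  set t := (ℓ - e % ℓ) % ℓ with ht
  have htlt : t < ℓ := Nat.mod_lt _ hl
  have hyread : ∀ b, b < ℓ → y.getD b d = f (t + b) := fun b hb => by
    rw [hfval _ (by omega), show e + (t + b) = e + t + b by ring]
    exact (pext_aligned d y hyne e b hb).symm
  have hyper : ∀ b, b + g < ℓ → y.getD (b + g) d = y.getD b d := fun b hb => by
    rw [hyread _ (by omega), hyread _ (by omega), show t + (b + g) = (t + b) + g by ring]
    exact hfw (t + b) (by omega)
  have h1 := hypow _ _ (eq_listPow_of_period d y g hg0 hgdvd hyper)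
  have hℓg : ℓ = g := by
    have h3 := Nat.div_mul_cancel hgdvd
    rw [← hℓ] at h1
    rw [h1, one_mul] at h3
    omega
  rw [hℓg]
  exact Nat.le_of_dvd hP hgdvdP

lemma fac_finite [Fintype α] (w : ℕ → α) (m : ℕ) :
    {u : List α | u.length = m ∧ u ∈ Fac w}.Finite :=
  (List.finite_length_le α m).subset (fun _ hu => le_of_eq hu.1)

lemma complexity_step [Fintype α] (d : α) (w : ℕ → α) (m : ℕ) (T : Finset (List α))
    (hT : ∀ u ∈ T, u.length = m ∧ RS d w u) :
    FacComplexity w m + T.card ≤ FacComplexity w (m + 1) := by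
  classical
  set F : Finset (List α) := (fac_finite w m).toFinset with hF
  set F' : Finset (List α) := (fac_finite w (m + 1)).toFinset with hF'
  set e1 : List α → List α := fun u =>
    if h : u ∈ Fac w then u ++ [w (h.choose + u.length)] else u with he1
  have he1eq : ∀ u, (hu : u ∈ Fac w) → e1 u = u ++ [w (hu.choose + u.length)] := by
    intro u hu
    simp only [he1, dif_pos hu]
  have hwinu : ∀ (u : List α) (i : ℕ), FactorAt w i u → u = win w i u.length := fun u i h => h
  have hfacext : ∀ (u : List α) (i : ℕ), u = win w i u.length → u ++ [w (i + u.length)] ∈ Fac w := by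
    intro u i hu
    have : u ++ [w (i + u.length)] = win w i (u.length + 1) := by
      rw [win_succ, ← hu]
    rw [this]
    exact win_mem_fac w i _
  have hTsub : ∀ u ∈ T, u ∈ Fac w := by
    intro u hu
    obtain ⟨i, j, hi, hj, hne⟩ := (hT u hu).2
    exact ⟨i, eq_win_of_match d w i u hi⟩
  -- the second extension for right special words
  set P : List α → Prop := fun u => ∃ c, u ++ [c] ∈ Fac w ∧ u ++ [c] ≠ e1 u with hP
  set e2 : List α → List α := fun u => if h : P u then u ++ [h.choose] else u with he2
  have hPT : ∀ u ∈ T, P u := by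
    intro u hu
    obtain ⟨i, j, hi, hj, hne⟩ := (hT u hu).2
    have hui : u = win w i u.length := eq_win_of_match d w i u hi
    have huj : u = win w j u.length := eq_win_of_match d w j u hj
    have hfi : u ++ [w (i + u.length)] ∈ Fac w := hfacext u i hui
    have hfj : u ++ [w (j + u.length)] ∈ Fac w := hfacext u j huj
    rcases eq_or_ne (u ++ [w (i + u.length)]) (e1 u) with h1 | h1
    · refine ⟨w (j + u.length), hfj, fun hcon => hne ?_⟩
      rw [← h1] at hcon
      have := List.append_inj_right hcon rfl
      simpa using this.symm
    · exact ⟨w (i + u.length), hfi, h1⟩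
  have he2eq : ∀ u ∈ T, ∃ c, e2 u = u ++ [c] ∧ e2 u ∈ Fac w ∧ e2 u ≠ e1 u := by
    intro u hu
    have h := hPT u hu
    refine ⟨h.choose, ?_, ?_, ?_⟩
    · simp only [he2, dif_pos h]
    · simp only [he2, dif_pos h]; exact h.choose_spec.1
    · simp only [he2, dif_pos h]; exact h.choose_spec.2
  -- images
  have himg1 : ∀ u ∈ F, e1 u ∈ F' := by
    intro u hu
    rw [hF, Set.Finite.mem_toFinset] at hu
    obtain ⟨hlen, hfac⟩ := hu
    rw [hF', Set.Finite.mem_toFinset]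
    rw [he1eq u hfac]
    constructor
    · simp [hlen]
    · exact hfacext u hfac.choose (hwinu u _ hfac.choose_spec)
  have himg2 : ∀ u ∈ T, e2 u ∈ F' := by
    intro u hu
    obtain ⟨c, hc, hfac, _⟩ := he2eq u hu
    rw [hF', Set.Finite.mem_toFinset]
    refine ⟨?_, hfac⟩
    rw [hc]
    simp [(hT u hu).1]
  have htake1 : ∀ u, (hu : u ∈ Fac w) → (e1 u).take u.length = u := by
    intro u hu
    rw [he1eq u hu]
    exact List.take_left
  have htake2 : ∀ u ∈ T, (e2 u).take u.length = u := by
    intro u hu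
    obtain ⟨c, hc, _, _⟩ := he2eq u hu
    rw [hc]
    exact List.take_left
  have hinj1 : Set.InjOn e1 ↑F := by
    intro u hu u' hu' heq
    rw [hF, Finset.mem_coe, Set.Finite.mem_toFinset] at hu hu'
    have t1 := htake1 u hu.2
    have t2 := htake1 u' hu'.2
    rw [hu.1] at t1
    rw [hu'.1] at t2
    rw [heq] at t1
    exact t1.symm.trans t2
  have hinj2 : Set.InjOn e2 ↑T := by
    intro u hu u' hu' heq
    rw [Finset.mem_coe] at hu hu'
    have t1 := htake2 u hu
    have t2 := htake2 u' hu'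
    rw [(hT u hu).1] at t1
    rw [(hT u' hu').1] at t2
    rw [heq] at t1
    exact t1.symm.trans t2
  have hdisj : Disjoint (F.image e1) (T.image e2) := by
    rw [Finset.disjoint_left]
    intro v hv1 hv2
    obtain ⟨u, hu, hue⟩ := Finset.mem_image.mp hv1
    obtain ⟨u', hu', hue'⟩ := Finset.mem_image.mp hv2
    rw [hF, Set.Finite.mem_toFinset] at hu
    have huu' : u = u' := by
      have t1 : v.take m = u := by
        rw [← hue, ← hu.1]
        exact htake1 u hu.2
      have t2 : v.take m = u' := by
        rw [← hue', ← (hT u' hu').1]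
        exact htake2 u' hu'
      rw [← t1, t2]
    obtain ⟨c, _, _, hne⟩ := he2eq u' hu'
    apply hne
    rw [hue', ← huu', ← hue]
  have hsub : F.image e1 ∪ T.image e2 ⊆ F' := by
    apply Finset.union_subset
    · intro v hv
      obtain ⟨u, hu, rfl⟩ := Finset.mem_image.mp hv
      exact himg1 u hu
    · intro v hv
      obtain ⟨u, hu, rfl⟩ := Finset.mem_image.mp hv
      exact himg2 u hu
  have hcard : F.card + T.card ≤ F'.card := by
    have h1 := Finset.card_le_card hsub
    rw [Finset.card_union_of_disjoint hdisj,
      Finset.card_image_of_injOn hinj1, Finset.card_image_of_injOn hinj2] at h1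
    exact h1
  have hc1 : FacComplexity w m = F.card :=
    Set.ncard_eq_toFinset_card _ (fac_finite w m)
  have hc2 : FacComplexity w (m + 1) = F'.card :=
    Set.ncard_eq_toFinset_card _ (fac_finite w (m + 1))
  omega

lemma greedy [Fintype α] (d : α) (S : Set (List α)) (hS : S.Infinite) :
    ∀ K, ∃ Y : Finset (List α), Y.card = K ∧ ↑Y ⊆ S ∧
      (∀ y ∈ Y, ∀ y' ∈ Y, Rot d y y' → y = y') := by
  classical
  intro K
  induction K with
  | zero => exact ⟨∅, by simp⟩
  | succ K ihK =>
    obtain ⟨Y, hcard, hsub, hpair⟩ := ihK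
    have hbad : (⋃ y ∈ (Y : Set (List α)),
        ({y' | Rot d y y'} ∪ {y' | Rot d y' y})).Finite :=
      Set.Finite.biUnion Y.finite_toSet
        (fun y _ => (rot_left_finite d y).union (rot_right_finite d y))
    obtain ⟨z, hzS, hzbad⟩ := (hS.diff hbad).nonempty
    have hzY : z ∉ Y := fun hzY =>
      hzbad (Set.mem_biUnion (Finset.mem_coe.mpr hzY) (Or.inl (rot_refl d z)))
    refine ⟨insert z Y, by rw [Finset.card_insert_of_notMem hzY, hcard], ?_, ?_⟩
    · intro a ha
      rcases Finset.mem_insert.mp (Finset.mem_coe.mp ha) with rfl | ha'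
      · exact hzS
      · exact hsub (Finset.mem_coe.mpr ha')
    · intro a ha b hb hab
      rcases Finset.mem_insert.mp ha with rfl | ha' <;>
        rcases Finset.mem_insert.mp hb with rfl | hb'
      · rfl
      · exact absurd (Set.mem_biUnion (Finset.mem_coe.mpr hb') (Or.inr hab)) hzbad
      · exact absurd (Set.mem_biUnion (Finset.mem_coe.mpr ha') (Or.inl hab)) hzbad
      · exact hpair a ha' b hb' hab

theorem finitely_many_unbounded_exponent [Fintype α] (w : ℕ → α)
    (h : ∃ A B : ℕ, ∀ n : ℕ, FacComplexity w n ≤ A * n + B) :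
    {y : List α | Primitive y ∧ ∀ n : ℕ, 1 ≤ n → listPow y n ∈ Fac w}.Finite := by
  classical
  obtain ⟨A, B, hAB⟩ := h
  set d := w 0 with hd
  set S := {y : List α | Primitive y ∧ ∀ n : ℕ, 1 ≤ n → listPow y n ∈ Fac w} with hSdef
  by_cases hep : ∃ N P, 0 < P ∧ ∀ k, N ≤ k → w (k + P) = w k
  · obtain ⟨N, P, hP, hper⟩ := hep
    exact (List.finite_length_le α P).subset
      (fun y hy => evp_bound d w N P hP hper y hy.1 hy.2)
  · rw [← Set.not_infinite]
    intro hinf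
    obtain ⟨Y, hcard, hsub, hpair⟩ := greedy d S hinf (A + 1)
    set L := Y.sup (fun y => y.length) with hL
    set m₀ := 8 * L with hm₀
    have hYS : ∀ y ∈ Y, Primitive y ∧ (∀ n, 1 ≤ n → listPow y n ∈ Fac w) := fun y hy =>
      hsub (Finset.mem_coe.mpr hy)
    have hstep : ∀ m, m₀ ≤ m → FacComplexity w m + (A + 1) ≤ FacComplexity w (m + 1) := by
      intro m hm
      have hsel : ∀ y ∈ Y, ∃ s, RS d w (win (pext d y) s m) := fun y hy =>
        exists_RS d w hep y (hYS y hy).1.1 (hYS y hy).2 m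
      choose sfun hsfun using hsel
      set T := Y.attach.image (fun y => win (pext d y.1) (sfun y.1 y.2) m) with hT
      have hTcard : T.card = A + 1 := by
        rw [hT, Finset.card_image_of_injOn, Finset.card_attach, hcard]
        intro a _ b _ hab
        have hla : a.1.length ≤ L := Finset.le_sup (f := fun y => y.length) a.2
        have hlb : b.1.length ≤ L := Finset.le_sup (f := fun y => y.length) b.2
        have hrot := windows_eq_rot d a.1 b.1 (hYS _ a.2).1 (hYS _ b.2).1 _ _ m
          (by omega) hab
        exact Subtype.ext (hpair a.1 a.2 b.1 b.2 hrot)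
      have hTprop : ∀ u ∈ T, u.length = m ∧ RS d w u := by
        intro u hu
        obtain ⟨y, _, rfl⟩ := Finset.mem_image.mp hu
        exact ⟨win_length _ _ _, hsfun y.1 y.2⟩
      have := complexity_step d w m T hTprop
      rwa [hTcard] at this
    have hlin : ∀ k, (A + 1) * k ≤ FacComplexity w (m₀ + k) := by
      intro k
      induction k with
      | zero => simp
      | succ k ih =>
        have hstep' := hstep (m₀ + k) (by omega)
        have e1 : m₀ + (k + 1) = m₀ + k + 1 := by ring
        rw [e1]
        calc (A + 1) * (k + 1) = (A + 1) * k + (A + 1) := by ring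
        _ ≤ FacComplexity w (m₀ + k) + (A + 1) := by omega
        _ ≤ FacComplexity w (m₀ + k + 1) := hstep'
    have h1 := hlin (A * m₀ + B + 1)
    have h2 := hAB (m₀ + (A * m₀ + B + 1))
    nlinarith
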